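/- Let T = {γ ∈ ℝ^n : γ_i < 0 for all i, Σ_{i=1}^n γ_i > −1}, let f(γ) = ½ Σ_{i=1}^n γ_i log(−γ_i) − ½ (1 + Σ_{j=1}^n γ_j) log(1 + Σ_{j=1}^n γ_j), and let F_j(r) = r_j²/(1 + Σ_{i=1}^n r_i²). Then the following two subsets of ℝ^n × ℝ^n are equal: {(∇f(γ), γ) : γ ∈ T} = {((log r_1, …, log r_n), −F(r)) : r ∈ (ℝ_{>0})^n}. (That is, in coordinates (y, γ) with y = log r, the Lagrangian L(O(−1), h_{−1}) = {(r, −F(r))} is exactly the graph Γ_{df} of the exact 1-form df over T.) -/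

import Mathlib

open scoped BigOperators

/-- The open cell `T = {γ ∈ ℝⁿ : γᵢ < 0, ∑ γᵢ > −1}`. -/
def openCellT (n : ℕ) : Set (Fin n → ℝ) := {γ | (∀ i, γ i < 0) ∧ -1 < ∑ i, γ i}

/-- The potential `f` of the T-dual Lagrangian `L(O(−1), h_{−1})`. -/
noncomputable def potentialF (n : ℕ) (γ : Fin n → ℝ) : ℝ :=
  (1 / 2) * ∑ i, γ i * Real.log (-γ i)
    - (1 / 2) * (1 + ∑ j, γ j) * Real.log (1 + ∑ j, γ j)

/-- The moment map image of the torus orbit `L(r)`: `F_j(r) = r_j² / (1 + ∑ r_i²)`. -/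
noncomputable def momentOfOrbit (n : ℕ) (r : Fin n → ℝ) : Fin n → ℝ :=
  fun j => r j ^ 2 / (1 + ∑ i, r i ^ 2)

lemma hasDeriv_xlognegx {x : ℝ} (hx : x < 0) :
    HasDerivAt (fun y : ℝ => y * Real.log (-y)) (Real.log (-x) + 1) x := by
  have h1 := (Real.hasDerivAt_mul_log (x := -x) (by linarith)).comp x (hasDerivAt_neg x)
  have h2 := h1.neg
  refine (h2.congr_deriv (by ring)).congr_of_eventuallyEq (Filter.Eventually.of_forall fun y => ?_)
  simp [Function.comp]

lemma deriv_coord {n : ℕ} {γ : Fin n → ℝ} (hγ : γ ∈ openCellT n) (i : Fin n) :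
    fderiv ℝ (potentialF n) γ (Pi.single i 1)
      = (1/2) * (Real.log (-γ i) - Real.log (1 + ∑ j, γ j)) := by
  obtain ⟨hneg, hsum⟩ := hγ
  have hS : (0:ℝ) < 1 + ∑ j, γ j := by linarith
  have hA : HasFDerivAt (fun γ : Fin n → ℝ => ∑ i, γ i * Real.log (-γ i))
      (∑ i, (Real.log (-γ i) + 1) • (ContinuousLinearMap.proj i :
        (Fin n → ℝ) →L[ℝ] ℝ)) γ := by
    refine HasFDerivAt.fun_sum fun j _ => ?_
    have hproj : HasFDerivAt (fun γ : Fin n → ℝ => γ j)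
        (ContinuousLinearMap.proj j : (Fin n → ℝ) →L[ℝ] ℝ) γ :=
      (ContinuousLinearMap.proj (R := ℝ) (φ := fun _ : Fin n => ℝ) j).hasFDerivAt
    exact (hasDeriv_xlognegx (hneg j)).comp_hasFDerivAt γ hproj
  have hsumd : HasFDerivAt (fun γ : Fin n → ℝ => 1 + ∑ j, γ j)
      (∑ j, (ContinuousLinearMap.proj j : (Fin n → ℝ) →L[ℝ] ℝ)) γ := by
    refine HasFDerivAt.const_add 1 ?_
    exact HasFDerivAt.fun_sum fun j _ =>
      (ContinuousLinearMap.proj (R := ℝ) (φ := fun _ : Fin n => ℝ) j).hasFDerivAt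
  have hB : HasFDerivAt (fun γ : Fin n → ℝ => (1 + ∑ j, γ j) * Real.log (1 + ∑ j, γ j))
      ((Real.log (1 + ∑ j, γ j) + 1) • ∑ j, (ContinuousLinearMap.proj j :
        (Fin n → ℝ) →L[ℝ] ℝ)) γ :=
    by have h := (Real.hasDerivAt_mul_log hS.ne').comp_hasFDerivAt γ hsumd; exact h
  have hf : HasFDerivAt (potentialF n)
      (((1:ℝ)/2) • (∑ i, (Real.log (-γ i) + 1) • (ContinuousLinearMap.proj i :
          (Fin n → ℝ) →L[ℝ] ℝ))
        - ((1:ℝ)/2) • ((Real.log (1 + ∑ j, γ j) + 1) • ∑ j,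
          (ContinuousLinearMap.proj j : (Fin n → ℝ) →L[ℝ] ℝ))) γ := by
    have := (hA.const_mul ((1:ℝ)/2)).sub (hB.const_mul ((1:ℝ)/2))
    have heq : potentialF n = fun x : Fin n → ℝ =>
        1 / 2 * ∑ i, x i * Real.log (-x i)
          - 1 / 2 * ((1 + ∑ j, x j) * Real.log (1 + ∑ j, x j)) := by
      funext x
      simp only [potentialF]
      ring
    rw [heq]
    exact this
  rw [hf.fderiv]
  simp [ContinuousLinearMap.sum_apply, Pi.single_apply, Finset.sum_ite_eq',
    mul_comm]
  ring

theorem stmt_6 (n : ℕ) (hn : 1 ≤ n) :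
    {p : (Fin n → ℝ) × (Fin n → ℝ) | ∃ γ ∈ openCellT n,
        p = (fun i => fderiv ℝ (potentialF n) γ (Pi.single i 1), γ)} =
      {p : (Fin n → ℝ) × (Fin n → ℝ) | ∃ r : Fin n → ℝ, (∀ i, 0 < r i) ∧
        p = (fun i => Real.log (r i), fun j => -(momentOfOrbit n r j))} := by
  ext p
  simp only [Set.mem_setOf_eq]
  constructor
  · rintro ⟨γ, hγ, rfl⟩
    obtain ⟨hneg, hsum⟩ := hγ
    have hS : (0:ℝ) < 1 + ∑ j, γ j := by linarith
    set S := ∑ j, γ j with hSdef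
    have hpos : ∀ i, (0:ℝ) < -γ i / (1 + S) := fun i =>
      div_pos (by have := hneg i; linarith) hS
    refine ⟨fun i => Real.sqrt (-γ i / (1 + S)),
      fun i => Real.sqrt_pos.2 (hpos i), ?_⟩
    have hsq : ∀ i, (Real.sqrt (-γ i / (1 + S))) ^ 2 = -γ i / (1 + S) := fun i =>
      Real.sq_sqrt (hpos i).le
    have hsum2 : ∑ i, (Real.sqrt (-γ i / (1 + S))) ^ 2 = -S / (1 + S) := by
      simp only [hsq]
      rw [← Finset.sum_div, ← Finset.sum_neg_distrib]
    have hdenom : 1 + ∑ i, (Real.sqrt (-γ i / (1 + S))) ^ 2 = 1 / (1 + S) := by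
      rw [hsum2]; field_simp; ring
    simp only [Prod.mk.injEq]
    constructor
    · funext i
      simp only [deriv_coord ⟨hneg, hsum⟩, ← hSdef]
      rw [Real.log_sqrt (hpos i).le,
        Real.log_div (by have := hneg i; linarith) hS.ne']
      ring
    · funext j
      simp only [momentOfOrbit]
      rw [hdenom, hsq]
      field_simp
  · rintro ⟨r, hr, rfl⟩
    have hQ : (0:ℝ) < 1 + ∑ i, r i ^ 2 := by positivity
    have hlt : ∀ j, (0:ℝ) < r j ^ 2 / (1 + ∑ i, r i ^ 2) := fun j =>
      div_pos (by have := hr j; positivity) hQ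
    have hsg : ∑ j, -(momentOfOrbit n r j)
        = -((∑ j, r j ^ 2) / (1 + ∑ i, r i ^ 2)) := by
      simp only [momentOfOrbit, ← Finset.sum_div, Finset.sum_neg_distrib]
    have h1 : (∑ j, r j ^ 2) / (1 + ∑ i, r i ^ 2) < 1 := by
      rw [div_lt_one hQ]; linarith
    have hmem : (fun j => -(momentOfOrbit n r j)) ∈ openCellT n := by
      refine ⟨fun j => ?_, ?_⟩
      · simp only [momentOfOrbit]
        have := hlt j; linarith
      · rw [hsg]; linarith
    refine ⟨fun j => -(momentOfOrbit n r j), hmem, ?_⟩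
    have hsg2 : (1:ℝ) + ∑ j, -(momentOfOrbit n r j) = 1 / (1 + ∑ i, r i ^ 2) := by
      rw [hsg]; field_simp; ring
    simp only [Prod.mk.injEq]
    refine ⟨funext fun i => ?_, trivial⟩
    simp only [deriv_coord hmem]
    simp only [hsg2]
    simp only [momentOfOrbit, neg_neg]
    rw [Real.log_div (by have := hr i; positivity) hQ.ne',
      Real.log_div one_ne_zero hQ.ne', Real.log_pow, Real.log_one]
    push_cast
    ring
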